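/- Assume |V| ≥ 3. Then: (i) every point (x, y, y′, w) of S satisfies ∑_{v∈V} x_v ≥ y + y′ (hence this inequality is valid for the route-design polytope P^RDP); and (ii) there exists an affinely independent family of |V| + 3 points of S, each of which satisfies ∑_{v∈V} x_v = y + y′ (so the inequality is facet defining for the (|V|+3)-dimensional polytope P^RDP). -/

import Mathlib

set_option maxHeartbeats 2000000


/-- The set `S` of integral feasible points `(x, y, y′, w)` of the route-design problem on an edge:
`x v ∈ {0,1}`, `y ∈ {0,1}`, `y′ ∈ {0,1}`, `w ≥ 0`, `∑ x v ≥ 2 y′`, `w − ∑ x v + y ≤ 0`,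
`x v ≤ y` for all `v`, and `y′ ≤ y`.  Its convex hull is the polytope `P^RDP`. -/
def RDPset (V : Type*) [Fintype V] : Set ((V → ℝ) × ℝ × ℝ × ℝ) :=
  {p | (∀ v, p.1 v = 0 ∨ p.1 v = 1) ∧ (p.2.1 = 0 ∨ p.2.1 = 1) ∧
       (p.2.2.1 = 0 ∨ p.2.2.1 = 1) ∧ 0 ≤ p.2.2.2 ∧
       2 * p.2.2.1 ≤ ∑ v, p.1 v ∧
       p.2.2.2 - (∑ v, p.1 v) + p.2.1 ≤ 0 ∧
       (∀ v, p.1 v ≤ p.2.1) ∧ p.2.2.1 ≤ p.2.1}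

section RDPaux

open Classical in
/-- The family of points: indices `0..n-1` give unit-vector points, index `n` gives `0`,
index `n+1` gives the `(χ_{a,b},1,1,0)` point, index `n+2` gives `(χ_{a,b},1,1,1)`. -/
noncomputable def RDPpt {V : Type*} [Fintype V] (a b : V) (e : Fin (Fintype.card V) ≃ V)
    (i : Fin (Fintype.card V + 3)) : (V → ℝ) × ℝ × ℝ × ℝ :=
  if hi : (i : ℕ) < Fintype.card V then
    (fun v => if v = e ⟨i, hi⟩ then 1 else 0, 1, 0, 0)
  else if (i : ℕ) = Fintype.card V then 0
  else if (i : ℕ) = Fintype.card V + 1 then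
    (fun v => (if v = a then 1 else 0) + (if v = b then 1 else 0), 1, 1, 0)
  else
    (fun v => (if v = a then 1 else 0) + (if v = b then 1 else 0), 1, 1, 1)

open Classical in
/-- A linear map sending the nonzero points of the family to standard basis vectors. -/
noncomputable def RDPdual (V : Type*) [Fintype V] (e : Fin (Fintype.card V) ≃ V) :
    ((V → ℝ) × ℝ × ℝ × ℝ) →ₗ[ℝ] (Fin (Fintype.card V + 3) → ℝ) where
  toFun p := fun j =>
    if hj : (j : ℕ) < Fintype.card V then
      p.1 (e ⟨j, hj⟩) -
        ((if (j : ℕ) = 0 then p.2.2.1 else 0) + (if (j : ℕ) = 1 then p.2.2.1 else 0))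
    else if (j : ℕ) = Fintype.card V + 1 then p.2.2.1 - p.2.2.2
    else if (j : ℕ) = Fintype.card V + 2 then p.2.2.2
    else 0
  map_add' p q := by
    funext j
    simp only [Prod.fst_add, Prod.snd_add, Pi.add_apply]
    split_ifs <;> ring
  map_smul' c p := by
    funext j
    simp only [Prod.smul_fst, Prod.smul_snd, Pi.smul_apply, smul_eq_mul, RingHom.id_apply]
    split_ifs <;> ring

end RDPaux

/-- for `|V| ≥ 3`, the inequality `∑ x v ≥ y + y′` is valid for every point of `S`
(hence for `P^RDP`), and there are `|V| + 3` affinely independent points of `S` satisfying it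
with equality (so it is facet defining for the `(|V|+3)`-dimensional polytope `P^RDP`). -/
theorem RDP_facet_sum_ge_y_add_y' (V : Type*) [Fintype V] (hV : 3 ≤ Fintype.card V) :
    (∀ p ∈ RDPset V, p.2.1 + p.2.2.1 ≤ ∑ v, p.1 v) ∧
    ∃ F : Fin (Fintype.card V + 3) → ((V → ℝ) × ℝ × ℝ × ℝ),
      AffineIndependent ℝ F ∧
      ∀ i, F i ∈ RDPset V ∧ (∑ v, (F i).1 v) = (F i).2.1 + (F i).2.2.1 := by
  classical
  constructor
  · rintro ⟨x, y, y', w⟩ ⟨hx, hy, hy', hw, h2, hwle, hxy, hy'y⟩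
    simp only at *
    have hs : 0 ≤ ∑ v, x v :=
      Finset.sum_nonneg fun v _ => by rcases hx v with h | h <;> simp [h]
    rcases hy with hy | hy <;> rcases hy' with hy1 | hy1 <;> linarith
  · set n := Fintype.card V with hn
    have h0 : (0 : ℕ) < n := by omega
    have h1 : (1 : ℕ) < n := by omega
    set e : Fin n ≃ V := (Fintype.equivFin V).symm with he
    set a : V := e ⟨0, h0⟩ with ha
    set b : V := e ⟨1, h1⟩ with hb
    have hab : a ≠ b := by
      simp only [ha, hb, ne_eq, EmbeddingLike.apply_eq_iff_eq, Fin.mk.injEq]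
      omega
    refine ⟨RDPpt a b e, ?_, ?_⟩
    · -- affine independence
      have hnn : (n : ℕ) < n + 3 := by omega
      rw [affineIndependent_iff_linearIndependent_vsub ℝ _ ⟨n, hnn⟩]
      have hzero : RDPpt a b e ⟨n, hnn⟩ = 0 := by
        simp [RDPpt, ← hn]
      have hkey : ∀ i : Fin (n + 3), i ≠ ⟨n, hnn⟩ →
          (RDPdual V e) (RDPpt a b e i) = Pi.single i 1 := by
        intro i hi
        have hi' : (i : ℕ) ≠ n := fun h => hi (Fin.ext h)
        funext j
        simp only [RDPdual, RDPpt, LinearMap.coe_mk, AddHom.coe_mk, Pi.single_apply, ha, hb,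
          EmbeddingLike.apply_eq_iff_eq, Fin.mk.injEq, Fin.ext_iff]
        split_ifs <;> simp_all <;> omega
      apply LinearIndependent.of_comp (RDPdual V e)
      have hcomp : ((RDPdual V e) ∘
            fun i : {x : Fin (n + 3) // x ≠ ⟨n, hnn⟩} =>
              RDPpt a b e ↑i -ᵥ RDPpt a b e ⟨n, hnn⟩)
          = fun i : {x : Fin (n + 3) // x ≠ ⟨n, hnn⟩} => Pi.single (i : Fin (n + 3)) 1 := by
        funext i
        simp [hzero, vsub_eq_sub, hkey i i.2]
      rw [hcomp]
      have hb' : LinearIndependent ℝ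
          (fun j : Fin (n + 3) => (Pi.single j 1 : Fin (n + 3) → ℝ)) := by
        have hfe : ⇑(Pi.basisFun ℝ (Fin (n + 3)))
            = fun j : Fin (n + 3) => (Pi.single j 1 : Fin (n + 3) → ℝ) := by
          funext j; simp
        simpa [hfe] using (Pi.basisFun ℝ (Fin (n + 3))).linearIndependent
      exact hb'.comp _ Subtype.val_injective
    · -- membership and equality
      intro i
      unfold RDPpt
      split_ifs with hi hi1 hi2
      · have hsum : ∑ v, (if v = e ⟨(i : ℕ), hi⟩ then (1 : ℝ) else 0) = 1 := by simp
        refine ⟨⟨fun v => ?_, Or.inr rfl, Or.inl rfl, le_rfl, ?_, ?_, fun v => ?_, ?_⟩, ?_⟩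
        · dsimp only; split_ifs <;> simp
        · simp only [hsum]; norm_num
        · simp only [hsum]; norm_num
        · dsimp only; split_ifs <;> norm_num
        · norm_num
        · simp only [hsum]; norm_num
      · refine ⟨⟨fun v => ?_, Or.inl rfl, Or.inl rfl, le_rfl, ?_, ?_, fun v => ?_, ?_⟩, ?_⟩ <;>
          simp
      · have hsum : ∑ v, ((if v = a then (1 : ℝ) else 0) + (if v = b then 1 else 0)) = 2 := by
          rw [Finset.sum_add_distrib]; simp; norm_num
        refine ⟨⟨fun v => ?_, Or.inr rfl, Or.inr rfl, le_rfl, ?_, ?_, fun v => ?_, ?_⟩, ?_⟩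
        · dsimp only; split_ifs with h h' <;> simp_all
        · simp only [hsum]; norm_num
        · simp only [hsum]; norm_num
        · dsimp only; split_ifs with h h' <;> simp_all
        · norm_num
        · simp only [hsum]; norm_num
      · have hsum : ∑ v, ((if v = a then (1 : ℝ) else 0) + (if v = b then 1 else 0)) = 2 := by
          rw [Finset.sum_add_distrib]; simp; norm_num
        refine ⟨⟨fun v => ?_, Or.inr rfl, Or.inr rfl, ?_, ?_, ?_, fun v => ?_, ?_⟩, ?_⟩
        · dsimp only; split_ifs with h h' <;> simp_all
        · norm_num
        · simp only [hsum]; norm_num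
        · simp only [hsum]; norm_num
        · dsimp only; split_ifs with h h' <;> simp_all
        · norm_num
        · simp only [hsum]; norm_num
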